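/- Let s be a nonzero integer and n ≥ 2. Then the cyclic system of n simultaneous congruences (∏_{k=1}^n q_k)/q_i ≡ s (mod |q_i|) for 1 ≤ i ≤ n has infinitely many solutions in nonzero integers (q_1, …, q_n) such that at least two of the |q_i| are ≥ 2 and gcd(q_1·q_2⋯q_n, s) = 1. -/

import Mathlib

open Finset

/-- For `r = 1`, the cyclic system of congruences
`(∏ q_k)/q_i ≡ s (mod |q_i|)` has infinitely many nontrivial integer
solutions with `gcd(q_1 ⋯ q_n, s) = 1`. -/
theorem cyclic_congruence_r_eq_one_infinite
    (s : ℤ) (hs : s ≠ 0) (n : ℕ) (hn : 2 ≤ n) :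
    {q : Fin n → ℤ |
        (∀ i, q i ≠ 0) ∧
        (∀ i, q i ∣ (∏ k ∈ Finset.univ.erase i, q k) - s) ∧
        (∃ i j, i ≠ j ∧ 2 ≤ |q i| ∧ 2 ≤ |q j|) ∧
        Int.gcd (∏ i, q i) s = 1}.Infinite := by
  have hs1 : (1:ℤ) ≤ s ^ 2 := by
    have : 0 < s ^ 2 := by positivity
    omega
  have hss : s ≤ s ^ 2 := by nlinarith [sq_nonneg (s - 1)]
  set i0 : Fin n := ⟨0, by omega⟩ with hi0
  set i1 : Fin n := ⟨1, by omega⟩ with hi1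
  have hne : i0 ≠ i1 := by simp [hi0, hi1, Fin.ext_iff]
  set M : ℕ → ℤ := fun k => 1 + ((k : ℤ) + 2) * s ^ 2 with hM
  have hM3 : ∀ k, 3 ≤ M k := by
    intro k
    have hk : (0:ℤ) ≤ (k : ℤ) := Int.natCast_nonneg k
    simp only [hM]
    nlinarith
  have hMs : ∀ k, s + 2 ≤ M k := by
    intro k
    have hk : (0:ℤ) ≤ (k : ℤ) := Int.natCast_nonneg k
    simp only [hM]
    nlinarith
  set f : ℕ → Fin n → ℤ := fun k i =>
    (if i = i0 then M k else 1) * (if i = i1 then s - M k else 1) with hf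
  have hprodT : ∀ k, ∀ T : Finset (Fin n),
      ∏ i ∈ T, f k i = (if i0 ∈ T then M k else 1) * (if i1 ∈ T then s - M k else 1) := by
    intro k T
    simp only [hf]
    rw [Finset.prod_mul_distrib, Finset.prod_ite_eq' T i0 (fun _ => M k),
      Finset.prod_ite_eq' T i1 (fun _ => s - M k)]
  have hf0 : ∀ k, f k i0 = M k := by
    intro k; simp [hf, hne]
  have hf1 : ∀ k, f k i1 = s - M k := by
    intro k; simp [hf, hne.symm]
  apply Set.infinite_of_injective_forall_mem (f := f)
  · intro a b hab
    have h := congrFun hab i0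
    rw [hf0, hf0] at h
    simp only [hM] at h
    have hs2 : (s:ℤ) ^ 2 ≠ 0 := by positivity
    have : ((a:ℤ) + 2) = ((b:ℤ) + 2) := by
      have := mul_right_cancel₀ hs2 (by linarith : ((a:ℤ) + 2) * s ^ 2 = ((b:ℤ) + 2) * s ^ 2)
      exact this
    exact_mod_cast by omega
  · intro k
    have h3 := hM3 k
    have hsm := hMs k
    refine ⟨?_, ?_, ?_, ?_⟩
    · intro i
      by_cases h0 : i = i0
      · rw [h0, hf0]; omega
      · by_cases h1 : i = i1
        · rw [h1, hf1]; omega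
        · simp [hf, h0, h1]
    · intro i
      by_cases h0 : i = i0
      · subst h0
        rw [hf0, hprodT k, if_neg (by simp), if_pos (by simp [hne.symm, Finset.mem_erase])]
        exact ⟨-1, by ring⟩
      · by_cases h1 : i = i1
        · subst h1
          rw [hf1, hprodT k, if_pos (by simp [hne, Finset.mem_erase]), if_neg (by simp)]
          exact ⟨-1, by ring⟩
        · simp [hf, h0, h1]
    · refine ⟨i0, i1, hne, ?_, ?_⟩
      · rw [hf0, abs_of_pos (by omega)]; omega
      · rw [hf1, abs_of_neg (by omega)]; omega
    · rw [hprodT k, if_pos (Finset.mem_univ _), if_pos (Finset.mem_univ _)]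
      rw [← Int.isCoprime_iff_gcd_eq_one]
      refine IsCoprime.mul_left ⟨1, -((k:ℤ) + 2) * s, ?_⟩ ⟨-1, 1 - ((k:ℤ) + 2) * s, ?_⟩
      · simp only [hM]; ring
      · simp only [hM]; ring
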